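/- Let T = NΔt for some N ∈ ℕ. Let G : ℝ × ℝ → ℝ satisfy |G(κ₁, s) − G(κ₂, s)| ≤ L|κ₁ − κ₂| for all κ₁, κ₂ ∈ ℝ and all s ∈ [a′, b′]. Let (k_{j+1/2})_{j∈ℤ} be real numbers with Σ_{j∈ℤ} |k_{j+1/2} − k_{j−1/2}| ≤ V < ∞, let u^n_j ∈ [a′, b′] for all j ∈ ℤ and 0 ≤ n ≤ N−1, and let g ∈ L²(ℝ × (0,T)). Then |Σ_{j∈ℤ} Σ_{n=0}^{N−1} ∫_{t^n}^{t^{n+1}} ∫_{x_j}^{x_{j+1/2}} (G(k_{j+1/2}, u^n_j) − G(k_{j−1/2}, u^n_j))·g(x,t) dx dt| ≤ L·V·Δx^{1/2}·T^{1/2}·‖g‖_{L²(ℝ×(0,T))}. -/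

import Mathlib

open MeasureTheory Filter Set

noncomputable section

/-- The sup-norm `‖g‖_∞` of a function `g : ℝ → ℝ`. -/
def supNorm (g : ℝ → ℝ) : ℝ := ⨆ x, |g x|

/-- The total variation `TV(k)` of a function `k : ℝ → ℝ`. -/
def totalVar (k : ℝ → ℝ) : ℝ := (eVariationOn k Set.univ).toReal

/-- The Engquist–Osher numerical flux associated to `f`. -/
def eoFlux (f : ℝ → ℝ) (u v : ℝ) : ℝ :=
  (f u + f v) / 2 - (∫ s in u..v, |deriv f s|) / 2

/-- The cell averages `k_{j+1/2} = (1/Δx) ∫_{x_j}^{x_{j+1}} k`. -/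
def kAvg (k : ℝ → ℝ) (dx : ℝ) (j : ℤ) : ℝ :=
  (1 / dx) * ∫ x in ((j : ℝ) * dx)..((j : ℝ) * dx + dx), k x

/-- The sign-adapted Engquist–Osher flux `f̂_{j+1/2}`, with arguments transposed when the
coefficient `kh j` is negative. -/
def signFlux (f : ℝ → ℝ) (kh : ℤ → ℝ) (v : ℤ → ℝ) (j : ℤ) : ℝ :=
  if 0 ≤ kh j then eoFlux f (v j) (v (j + 1)) else eoFlux f (v (j + 1)) (v j)

/-- The numerical flux `h_{j+1/2} = k_{j+1/2} f̂_{j+1/2}`. -/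
def numFlux (f k : ℝ → ℝ) (dx : ℝ) (v : ℤ → ℝ) (j : ℤ) : ℝ :=
  kAvg k dx j * signFlux f (kAvg k dx) v j

/-- Backward difference `D₋v_j = (v_j - v_{j-1})/Δx`. -/
def Dm (dx : ℝ) (v : ℤ → ℝ) (j : ℤ) : ℝ := (v j - v (j - 1)) / dx

/-- Forward difference `D₊v_j = (v_{j+1} - v_j)/Δx`. -/
def Dp (dx : ℝ) (v : ℤ → ℝ) (j : ℤ) : ℝ := (v (j + 1) - v j) / dx

/-- The square of the discrete `ℓ²` norm: `‖v‖² = Δx Σ_j v_j²`. -/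
def l2sq (dx : ℝ) (v : ℤ → ℝ) : ℝ := dx * ∑' j : ℤ, (v j) ^ 2

/-- The fully-discrete capillarity scheme
`D₊ᵗu^n_j + D₋h^n_{j+1/2} = βΔx·D₊D₋u^n_j + γμ(Δx)·D₊ᵗD₊D₋u^n_j`
with initial data the cell averages of `u0`. -/
def capScheme (f k u0 : ℝ → ℝ) (β γ μ dx dt : ℝ) (u : ℕ → ℤ → ℝ) : Prop :=
  (∀ j : ℤ, u 0 j =
      (1 / dx) * ∫ x in ((j : ℝ) * dx - dx / 2)..((j : ℝ) * dx + dx / 2), u0 x) ∧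
  ∀ (n : ℕ) (j : ℤ),
    (u (n + 1) j - u n j) / dt + Dm dx (numFlux f k dx (u n)) j
      = β * dx * Dp dx (Dm dx (u n)) j
        + γ * μ * ((Dp dx (Dm dx (u (n + 1))) j - Dp dx (Dm dx (u n)) j) / dt)

/-- The fully-discrete diffusive–dispersive scheme
`D₊ᵗu^n_j + D₋h^n_{j+1/2} = βΔx·D₊D₋u^n_j + γμ(Δx)·D₊D₋D₋u^n_j`
with initial data the cell averages of `u0`. -/
def ddScheme (f k u0 : ℝ → ℝ) (β γ μ dx dt : ℝ) (u : ℕ → ℤ → ℝ) : Prop :=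
  (∀ j : ℤ, u 0 j =
      (1 / dx) * ∫ x in ((j : ℝ) * dx - dx / 2)..((j : ℝ) * dx + dx / 2), u0 x) ∧
  ∀ (n : ℕ) (j : ℤ),
    (u (n + 1) j - u n j) / dt + Dm dx (numFlux f k dx (u n)) j
      = β * dx * Dp dx (Dm dx (u n)) j
        + γ * μ * Dp dx (Dm dx (Dm dx (u n))) j

/-- The CFL condition for the capillarity scheme. -/
def cflCap (f k : ℝ → ℝ) (β γ μ dx dt δ : ℝ) : Prop :=
  max (2 * max (supNorm f) (max (supNorm (deriv f)) (supNorm k)) + (dt / dx) / 2)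
      ((dt / dx) / 2 * (1 + β * dx ^ 2 / (γ * μ)))
    ≤ min (1 - δ) (β - δ)

/-- The explicit CFL condition for the diffusive–dispersive scheme. -/
def cflDD (f k : ℝ → ℝ) (β γ μ dx dt δ : ℝ) : Prop :=
  max (2 * (dt / dx) * (β ^ 2 * dx ^ 2 / (γ * μ) + 2 * γ * μ / dx ^ 2))
      (8 * (dt / dx) * supNorm k ^ 2 * supNorm (deriv f) ^ 2)
    ≤ min (1 - δ) (β - δ)

/-- The piecewise-constant interpolant `u_{Δx}(x,t) = u^n_j` on
`[x_{j-1/2}, x_{j+1/2}) × [t^n, t^{n+1})`. -/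
def pcInterp (dx dt : ℝ) (u : ℕ → ℤ → ℝ) (p : ℝ × ℝ) : ℝ :=
  u (⌊p.2 / dt⌋.toNat) ⌊p.1 / dx + 1 / 2⌋

/-- Finite support of the grid function at each time level. -/
def finSupp (u : ℕ → ℤ → ℝ) : Prop :=
  ∀ n : ℕ, ∃ J : ℕ, ∀ j : ℤ, (J : ℤ) < |j| → u n j = 0

/-- The `i`-th open interval of the partition of `ℝ` induced by the points `ξ 0 < ⋯ < ξ (M-1)`. -/
def pieceSet (M : ℕ) (ξ : Fin M → ℝ) (i : Fin (M + 1)) : Set ℝ :=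
  {x | (∀ m : Fin M, (m : ℕ) < (i : ℕ) → ξ m < x) ∧ (∀ m : Fin M, (i : ℕ) ≤ (m : ℕ) → x < ξ m)}

/-- `k` is piecewise Lipschitz: on each piece of the partition induced by `ξ`, it agrees with a
globally Lipschitz function (in particular it is Lipschitz on the closure of each piece, up to
redefining it at the partition points). -/
def piecewiseLip (M : ℕ) (ξ : Fin M → ℝ) (k : ℝ → ℝ) : Prop :=
  ∀ i : Fin (M + 1), ∃ (κ : ℝ → ℝ) (L : NNReal),
    LipschitzWith L κ ∧ ∀ x ∈ pieceSet M ξ i, k x = κ x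

end

/-- bound on the perturbation term `Σ_{j,n} ∫∫ (G(k_{j+1/2},u^n_j) −
G(k_{j−1/2},u^n_j)) g` in terms of the Lipschitz constant `L`, the variation bound `V`,
`Δx^{1/2}`, `T^{1/2}` and the `L²` norm of `g` on `ℝ × (0,T)`. -/
lemma cs_abs_integral {E : Set (ℝ × ℝ)} (hfin : volume E < ⊤) {s : ℝ × ℝ → ℝ}
    (hs : IntegrableOn s E) (hs2 : IntegrableOn (fun p => s p ^ 2) E) :
    ∫ p in E, |s p| ≤ Real.sqrt ((volume E).toReal) * Real.sqrt (∫ p in E, s p ^ 2) := by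
  set m := (volume E).toReal with hmdef
  set A := ∫ p in E, s p ^ 2 with hAdef
  have hA : 0 ≤ A := integral_nonneg fun p => sq_nonneg _
  have hm : 0 ≤ m := ENNReal.toReal_nonneg
  have key : ∀ ε : ℝ, 0 < ε → ∫ p in E, |s p| ≤ (ε * A + m / ε) / 2 := by
    intro ε hε
    have hconst : IntegrableOn (fun _ : ℝ × ℝ => 1 / ε) E :=
      integrableOn_const hfin.ne
    have hint : Integrable (fun p => (ε * s p ^ 2 + 1 / ε) / 2) (volume.restrict E) :=
      ((hs2.const_mul ε).add hconst).div_const 2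
    have hmono : ∫ p in E, |s p| ≤ ∫ p in E, (ε * s p ^ 2 + 1 / ε) / 2 := by
      refine integral_mono hs.abs hint fun p => ?_
      have h2 : 2 * ε * |s p| ≤ ε ^ 2 * s p ^ 2 + 1 := by
        nlinarith [sq_nonneg (ε * |s p| - 1), sq_abs (s p)]
      calc |s p| = (2 * ε * |s p|) / (2 * ε) := by field_simp
        _ ≤ (ε ^ 2 * s p ^ 2 + 1) / (2 * ε) := by gcongr
        _ = (ε * s p ^ 2 + 1 / ε) / 2 := by field_simp
    have heq : ∫ p in E, (ε * s p ^ 2 + 1 / ε) / 2 = (ε * A + m / ε) / 2 := by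
      rw [integral_div, integral_add (hs2.const_mul ε) hconst, integral_const_mul,
        setIntegral_const, smul_eq_mul, measureReal_def, ← hAdef, ← hmdef]
      ring
    linarith [hmono, heq.le]
  by_cases hA0 : A = 0
  · have hle : ∫ p in E, |s p| ≤ 0 := by
      refine le_of_forall_pos_le_add fun δ hδ => ?_
      by_cases hm0 : m = 0
      · have := key 1 one_pos
        rw [hA0, hm0] at this
        simp at this
        linarith
      · have hmpos : 0 < m := lt_of_le_of_ne hm (Ne.symm hm0)
        have hε : 0 < m / (2 * δ) := by positivity
        have := key _ hε
        rw [hA0] at this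
        have heq : (m / (2 * δ) * 0 + m / (m / (2 * δ))) / 2 = δ := by
          field_simp; ring
        linarith [heq ▸ this]
    have : Real.sqrt A = 0 := by rw [hA0, Real.sqrt_zero]
    rw [this, mul_zero]
    exact hle
  · have hApos : 0 < A := lt_of_le_of_ne hA (Ne.symm hA0)
    by_cases hm0 : m = 0
    · exfalso
      have : volume E = 0 := by
        rcases (ENNReal.toReal_eq_zero_iff _).1 hm0 with h | h
        · exact h
        · exact absurd h hfin.ne
      have : volume.restrict E = 0 := by
        rw [Measure.restrict_eq_zero]; exact this
      rw [hAdef] at hApos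
      rw [this] at hApos
      simp at hApos
    · have hmpos : 0 < m := lt_of_le_of_ne hm (Ne.symm hm0)
      set a := Real.sqrt A with hadef
      set b := Real.sqrt m with hbdef
      have ha : 0 < a := Real.sqrt_pos.2 hApos
      have hb : 0 < b := Real.sqrt_pos.2 hmpos
      have hA' : A = a ^ 2 := (Real.sq_sqrt hA).symm
      have hm' : m = b ^ 2 := (Real.sq_sqrt hm).symm
      have hε : 0 < b / a := by positivity
      have := key _ hε
      have heq : (b / a * A + m / (b / a)) / 2 = b * a := by
        rw [hA', hm']; field_simp; ring
      linarith [heq ▸ this]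

theorem coefficient_perturbation_bound (G g : ℝ → ℝ → ℝ) (kh : ℤ → ℝ) (u : ℕ → ℤ → ℝ)
    (a' b' L V dx dt T : ℝ) (N : ℕ)
    (hdx : 0 < dx) (hdt : 0 < dt) (hT : T = N * dt)
    (hG : ∀ κ₁ κ₂ s : ℝ, s ∈ Set.Icc a' b' → |G κ₁ s - G κ₂ s| ≤ L * |κ₁ - κ₂|)
    (hksum : Summable fun j : ℤ => |kh j - kh (j - 1)|)
    (hkV : (∑' j : ℤ, |kh j - kh (j - 1)|) ≤ V)
    (hu : ∀ n < N, ∀ j : ℤ, u n j ∈ Set.Icc a' b')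
    (hgm : Measurable (Function.uncurry g))
    (hg : MemLp (fun p : ℝ × ℝ => g p.1 p.2) 2 (volume.restrict (Set.univ ×ˢ Set.Ioo 0 T))) :
    |∑' j : ℤ, ∑ n ∈ Finset.range N,
        ∫ t in ((n : ℝ) * dt)..(((n : ℝ) + 1) * dt),
          ∫ x in ((j : ℝ) * dx)..((j : ℝ) * dx + dx / 2),
            (G (kh j) (u n j) - G (kh (j - 1)) (u n j)) * g x t|
      ≤ L * V * Real.sqrt dx * Real.sqrt T *
          Real.sqrt (∫ p in Set.univ ×ˢ Set.Ioo 0 T, (g p.1 p.2) ^ 2) := by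
  rcases Nat.eq_zero_or_pos N with hN0 | hNpos
  · subst hN0
    simp [hT, Real.sqrt_zero]
  have hdt0 : (0 : ℝ) ≤ dt := hdt.le
  have hT0 : (0 : ℝ) ≤ T := by rw [hT]; positivity
  have hL : 0 ≤ L := by
    have h := hG 0 1 (u 0 0) (hu 0 hNpos 0)
    have h2 : |(0 : ℝ) - 1| = 1 := by norm_num
    rw [h2, mul_one] at h
    exact le_trans (abs_nonneg _) h
  have hV0 : 0 ≤ V := le_trans (tsum_nonneg fun j => abs_nonneg _) hkV
  set Q : Set (ℝ × ℝ) := Set.univ ×ˢ Set.Ioo 0 T with hQ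
  set S : Set (ℝ × ℝ) := Set.Ioo 0 T ×ˢ (Set.univ : Set ℝ) with hS
  set f : ℝ × ℝ → ℝ := fun p => g p.2 p.1 with hf
  have hfm : Measurable f := hgm.comp measurable_swap
  have hgsq : IntegrableOn (fun p : ℝ × ℝ => g p.1 p.2 ^ 2) Q := hg.integrable_sq
  have hrQ : volume.restrict Q
      = (volume.restrict (Set.univ : Set ℝ)).prod (volume.restrict (Set.Ioo 0 T)) := by
    rw [Measure.volume_eq_prod, Measure.prod_restrict]
  have hrS : volume.restrict S
      = (volume.restrict (Set.Ioo 0 T)).prod (volume.restrict (Set.univ : Set ℝ)) := by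
    rw [Measure.volume_eq_prod, Measure.prod_restrict]
  have hf2S : IntegrableOn (fun p => f p ^ 2) S := by
    rw [IntegrableOn, hrS]
    rw [IntegrableOn, hrQ] at hgsq
    exact hgsq.swap
  set I := ∫ p in Q, g p.1 p.2 ^ 2 with hI
  have hIfull_eq : (∫ p in S, f p ^ 2) = I := by
    rw [hI, hrS, hrQ]
    exact integral_prod_swap (fun z : ℝ × ℝ => g z.1 z.2 ^ 2)
  have hInn : 0 ≤ I := by
    rw [hI]; exact integral_nonneg fun p => sq_nonneg _
  -- grid sets
  set Tt : ℕ → Set ℝ := fun n => Set.Ioo ((n : ℝ) * dt) (((n : ℝ) + 1) * dt) with hTt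
  set Sx : ℤ → Set ℝ := fun j => Set.Ioo ((j : ℝ) * dx) ((j : ℝ) * dx + dx / 2) with hSx
  set Ej : ℤ → Set (ℝ × ℝ) := fun j => Set.Ioo 0 T ×ˢ Sx j with hEj
  have hTsub : ∀ n, n < N → Tt n ⊆ Set.Ioo 0 T := by
    intro n hn t ht
    obtain ⟨ht1, ht2⟩ := ht
    constructor
    · have : (0 : ℝ) ≤ (n : ℝ) * dt := by positivity
      linarith
    · have hle : ((n : ℝ) + 1) ≤ (N : ℝ) := by exact_mod_cast hn
      have : ((n : ℝ) + 1) * dt ≤ (N : ℝ) * dt := mul_le_mul_of_nonneg_right hle hdt0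
      rw [hT]; linarith
  have hEsub : ∀ j, Ej j ⊆ S := fun j => Set.prod_mono subset_rfl (Set.subset_univ _)
  have hvolEj : ∀ j, volume (Ej j) = ENNReal.ofReal T * ENNReal.ofReal (dx / 2) := by
    intro j
    rw [hEj]
    rw [Measure.volume_eq_prod, Measure.prod_prod, Real.volume_Ioo, Real.volume_Ioo]
    norm_num
  have hEjlt : ∀ j, volume (Ej j) < ⊤ := by
    intro j; rw [hvolEj j]
    exact ENNReal.mul_lt_top ENNReal.ofReal_lt_top ENNReal.ofReal_lt_top
  have hEjtoReal : ∀ j, (volume (Ej j)).toReal = T * (dx / 2) := by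
    intro j
    rw [hvolEj j, ENNReal.toReal_mul, ENNReal.toReal_ofReal hT0,
      ENNReal.toReal_ofReal (by linarith : (0:ℝ) ≤ dx / 2)]
  have hf2Ej : ∀ j, IntegrableOn (fun p => f p ^ 2) (Ej j) := fun j => hf2S.mono_set (hEsub j)
  have hfEj : ∀ j, IntegrableOn f (Ej j) := by
    intro j
    have hb : IntegrableOn (fun p => (f p ^ 2 + 1) / 2) (Ej j) :=
      ((hf2Ej j).add (integrableOn_const (hEjlt j).ne)).div_const 2
    refine hb.mono' hfm.aestronglyMeasurable.restrict ?_
    filter_upwards with p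
    rw [Real.norm_eq_abs]
    nlinarith [sq_nonneg (|f p| - 1), sq_abs (f p)]
  -- per-j bound
  set C := L * (Real.sqrt dx * Real.sqrt T * Real.sqrt I) with hC
  have hC0 : 0 ≤ C := by positivity
  have hbound : ∀ j : ℤ,
      |∑ n ∈ Finset.range N,
        ∫ t in ((n : ℝ) * dt)..(((n : ℝ) + 1) * dt),
          ∫ x in ((j : ℝ) * dx)..((j : ℝ) * dx + dx / 2),
            (G (kh j) (u n j) - G (kh (j - 1)) (u n j)) * g x t|
      ≤ C * |kh j - kh (j - 1)| := by
    intro j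
    set c : ℕ → ℝ := fun n => G (kh j) (u n j) - G (kh (j - 1)) (u n j) with hc
    have hsubbox : ∀ n, n < N → Tt n ×ˢ Sx j ⊆ Ej j := fun n hn =>
      Set.prod_mono (hTsub n hn) subset_rfl
    have hfbox : ∀ n, n < N → IntegrableOn f (Tt n ×ˢ Sx j) := fun n hn =>
      (hfEj j).mono_set (hsubbox n hn)
    have hDper : ∀ n, n < N →
        (∫ t in ((n : ℝ) * dt)..(((n : ℝ) + 1) * dt),
          ∫ x in ((j : ℝ) * dx)..((j : ℝ) * dx + dx / 2), g x t)
        = ∫ p in Tt n ×ˢ Sx j, f p := by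
      intro n hn
      have h1 : (n : ℝ) * dt ≤ ((n : ℝ) + 1) * dt := by nlinarith
      have h2 : (j : ℝ) * dx ≤ (j : ℝ) * dx + dx / 2 := by linarith
      have hinner : ∀ t : ℝ, (∫ x in ((j : ℝ) * dx)..((j : ℝ) * dx + dx / 2), g x t)
          = ∫ x in Sx j, g x t := by
        intro t
        rw [intervalIntegral.integral_of_le h2, integral_Ioc_eq_integral_Ioo]
      rw [intervalIntegral.integral_of_le h1, integral_Ioc_eq_integral_Ioo]
      simp_rw [hinner]
      have hint := hfbox n hn
      rw [IntegrableOn, Measure.volume_eq_prod] at hint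
      have := setIntegral_prod f hint
      rw [← Measure.volume_eq_prod] at this
      rw [this]
    have hterm : ∀ n ∈ Finset.range N,
        (∫ t in ((n : ℝ) * dt)..(((n : ℝ) + 1) * dt),
          ∫ x in ((j : ℝ) * dx)..((j : ℝ) * dx + dx / 2), c n * g x t)
        = c n * ∫ p in Tt n ×ˢ Sx j, f p := by
      intro n hn
      rw [← hDper n (Finset.mem_range.1 hn)]
      simp_rw [intervalIntegral.integral_const_mul]
    have hcb : ∀ n, n < N → |c n| ≤ L * |kh j - kh (j - 1)| := by
      intro n hn
      exact hG (kh j) (kh (j - 1)) (u n j) (hu n hn j)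
    -- disjointness of time boxes
    have hTdisj : ∀ m n : ℕ, m < n → Disjoint (Tt m) (Tt n) := by
      intro m n hmn
      rw [Set.disjoint_left]
      rintro t ⟨_, h2⟩ ⟨h3, _⟩
      have hle : ((m : ℝ) + 1) ≤ (n : ℝ) := by exact_mod_cast hmn
      have : ((m : ℝ) + 1) * dt ≤ (n : ℝ) * dt := mul_le_mul_of_nonneg_right hle hdt0
      linarith
    have hdisj : Set.Pairwise ↑(Finset.range N) (Function.onFun Disjoint fun n => Tt n ×ˢ Sx j) := by
      intro m _ n _ hmn
      have hd : Disjoint (Tt m) (Tt n) := by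
        rcases lt_or_gt_of_ne hmn with h | h
        · exact hTdisj m n h
        · exact (hTdisj n m h).symm
      rw [Function.onFun, Set.disjoint_left]
      rintro p ⟨hp1, _⟩ ⟨hq1, _⟩
      exact Set.disjoint_left.1 hd hp1 hq1
    have hunion : ∑ n ∈ Finset.range N, ∫ p in Tt n ×ˢ Sx j, |f p|
        = ∫ p in ⋃ n ∈ Finset.range N, Tt n ×ˢ Sx j, |f p| := by
      refine (integral_biUnion_finset _ (fun n _ => (measurableSet_Ioo.prod measurableSet_Ioo)) hdisj ?_).symm
      intro n hn
      exact ((hfbox n (Finset.mem_range.1 hn)).abs)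
    have hUsub : (⋃ n ∈ Finset.range N, Tt n ×ˢ Sx j) ⊆ Ej j := by
      intro p hp
      simp only [Set.mem_iUnion] at hp
      obtain ⟨n, hn, hmem⟩ := hp
      exact hsubbox n (Finset.mem_range.1 hn) hmem
    have hle1 : ∫ p in ⋃ n ∈ Finset.range N, Tt n ×ˢ Sx j, |f p| ≤ ∫ p in Ej j, |f p| := by
      refine setIntegral_mono_set ((hfEj j).abs) ?_ (HasSubset.Subset.eventuallyLE hUsub)
      filter_upwards with p using abs_nonneg _
    have hcs : ∫ p in Ej j, |f p| ≤ Real.sqrt (T * (dx / 2)) * Real.sqrt (∫ p in Ej j, f p ^ 2) := by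
      have := cs_abs_integral (hEjlt j) (hfEj j) (hf2Ej j)
      rwa [hEjtoReal j] at this
    have hsq1 : Real.sqrt (T * (dx / 2)) ≤ Real.sqrt T * Real.sqrt dx := by
      rw [Real.sqrt_mul hT0]
      have : Real.sqrt (dx / 2) ≤ Real.sqrt dx := Real.sqrt_le_sqrt (by linarith)
      exact mul_le_mul_of_nonneg_left this (Real.sqrt_nonneg _)
    have hsq2 : Real.sqrt (∫ p in Ej j, f p ^ 2) ≤ Real.sqrt I := by
      apply Real.sqrt_le_sqrt
      rw [← hIfull_eq]
      refine setIntegral_mono_set hf2S ?_ (HasSubset.Subset.eventuallyLE (hEsub j))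
      filter_upwards with p using sq_nonneg _
    have hEjnn : 0 ≤ ∫ p in Ej j, |f p| := integral_nonneg fun p => abs_nonneg _
    have hEint : ∫ p in Ej j, |f p| ≤ Real.sqrt dx * Real.sqrt T * Real.sqrt I := by
      calc ∫ p in Ej j, |f p|
          ≤ Real.sqrt (T * (dx / 2)) * Real.sqrt (∫ p in Ej j, f p ^ 2) := hcs
        _ ≤ (Real.sqrt T * Real.sqrt dx) * Real.sqrt I := by
            apply mul_le_mul hsq1 hsq2 (Real.sqrt_nonneg _)
            positivity
        _ = Real.sqrt dx * Real.sqrt T * Real.sqrt I := by ring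
    calc |∑ n ∈ Finset.range N,
        ∫ t in ((n : ℝ) * dt)..(((n : ℝ) + 1) * dt),
          ∫ x in ((j : ℝ) * dx)..((j : ℝ) * dx + dx / 2),
            (G (kh j) (u n j) - G (kh (j - 1)) (u n j)) * g x t|
        ≤ ∑ n ∈ Finset.range N,
            |∫ t in ((n : ℝ) * dt)..(((n : ℝ) + 1) * dt),
              ∫ x in ((j : ℝ) * dx)..((j : ℝ) * dx + dx / 2),
                (G (kh j) (u n j) - G (kh (j - 1)) (u n j)) * g x t| :=
          Finset.abs_sum_le_sum_abs _ _
      _ ≤ ∑ n ∈ Finset.range N,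
            (L * |kh j - kh (j - 1)|) * ∫ p in Tt n ×ˢ Sx j, |f p| := by
          refine Finset.sum_le_sum fun n hn => ?_
          have hn' := Finset.mem_range.1 hn
          rw [hterm n hn, abs_mul]
          refine mul_le_mul (hcb n hn') ?_ (abs_nonneg _) ?_
          · have h := norm_integral_le_integral_norm
              (μ := volume.restrict (Tt n ×ˢ Sx j)) f
            simpa [Real.norm_eq_abs] using h
          · positivity
      _ = (L * |kh j - kh (j - 1)|) * ∑ n ∈ Finset.range N, ∫ p in Tt n ×ˢ Sx j, |f p| := by
          rw [Finset.mul_sum]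
      _ ≤ (L * |kh j - kh (j - 1)|) * (Real.sqrt dx * Real.sqrt T * Real.sqrt I) := by
          apply mul_le_mul_of_nonneg_left _ (by positivity)
          rw [hunion]
          exact hle1.trans hEint
      _ = C * |kh j - kh (j - 1)| := by rw [hC]; ring
  have hsum2 : Summable (fun j : ℤ => C * |kh j - kh (j - 1)|) := hksum.mul_left C
  have hmain : ‖∑' j : ℤ, ∑ n ∈ Finset.range N,
        ∫ t in ((n : ℝ) * dt)..(((n : ℝ) + 1) * dt),
          ∫ x in ((j : ℝ) * dx)..((j : ℝ) * dx + dx / 2),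
            (G (kh j) (u n j) - G (kh (j - 1)) (u n j)) * g x t‖
      ≤ ∑' j : ℤ, C * |kh j - kh (j - 1)| :=
    tsum_of_norm_bounded hsum2.hasSum
      (fun j => by rw [Real.norm_eq_abs]; exact hbound j)
  rw [Real.norm_eq_abs] at hmain
  calc |∑' j : ℤ, ∑ n ∈ Finset.range N,
        ∫ t in ((n : ℝ) * dt)..(((n : ℝ) + 1) * dt),
          ∫ x in ((j : ℝ) * dx)..((j : ℝ) * dx + dx / 2),
            (G (kh j) (u n j) - G (kh (j - 1)) (u n j)) * g x t|
      ≤ ∑' j : ℤ, C * |kh j - kh (j - 1)| := hmain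
    _ = C * ∑' j : ℤ, |kh j - kh (j - 1)| := tsum_mul_left
    _ ≤ C * V := mul_le_mul_of_nonneg_left hkV hC0
    _ = L * V * Real.sqrt dx * Real.sqrt T * Real.sqrt I := by rw [hC]; ring
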